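/- Let α > -1/2, a ≥ 1 and 0 < σ < α+1. There exists a constant C, depending only on α and σ (in particular, independent of j), such that for every integer j ≥ 0 and all x, y > 0 one has x^{aj} y^{aj} H_{α+aj,σ}(x,y) ≤ C · \overline{K}_{α,σ}(x,y), where \overline{K}_{α,σ}(x,y) = (xy)^{−α−1/2} ∫₀¹ (log((1+ξ)/(1−ξ)))^{σ−1} ξ^{−1/2} (1−ξ²)^{−1/2} exp( −(x−y)²/(4ξ) − ξ(x+y)²/4 ) dξ. -/

import Mathlib

open MeasureTheory
open scoped ENNReal NNReal

/-- One-dimensional Laguerre heat kernel of Hermite type `G^H_{α,t}(x,y)`. -/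
noncomputable def lagHeatH (α t x y : ℝ) : ℝ :=
  (x * y) ^ (α + 1/2) * Real.sinh (2 * t) ^ (-1 - α) *
    ∫ s in (-1:ℝ)..1,
      Real.exp (-(1/2) * (Real.cosh (2 * t) / Real.sinh (2 * t)) * (x ^ 2 + y ^ 2)
          - x * y * s / Real.sinh (2 * t)) *
        ((1 - s ^ 2) ^ (α - 1/2) / (2 ^ α * Real.sqrt Real.pi * Real.Gamma (α + 1/2)))

/-- Laguerre heat kernel of convolution type `G_{α,t}(x,y) = (xy)^{−α−1/2} G^H_{α,t}(x,y)`. -/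
noncomputable def lagHeatC (α t x y : ℝ) : ℝ :=
  (x * y) ^ (-α - 1/2) * lagHeatH α t x y

/-- Potential kernel `H_{α,σ}(x,y) = Γ(σ)⁻¹ ∫₀^∞ G_{α,t}(x,y) t^{σ−1} dt`. -/
noncomputable def potC (α σ x y : ℝ) : ℝ :=
  (Real.Gamma σ)⁻¹ * ∫ t in Set.Ioi (0:ℝ), lagHeatC α t x y * t ^ (σ - 1)

/-- The majorant kernel `\overline{K}_{α,σ}(x,y)`. -/
noncomputable def Kbar (α σ x y : ℝ) : ℝ :=
  (x * y) ^ (-α - 1/2) *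
    ∫ ξ in Set.Ioo (0:ℝ) 1,
      (Real.log ((1 + ξ) / (1 - ξ))) ^ (σ - 1) * ξ ^ (-(1:ℝ)/2) * (1 - ξ ^ 2) ^ (-(1:ℝ)/2) *
        Real.exp (-(x - y) ^ 2 / (4 * ξ) - ξ * (x + y) ^ 2 / 4)

/-! ### Auxiliary material -/

section Aux

open Set intervalIntegral

/-- hyperbolic tangent -/
noncomputable def th (t : ℝ) : ℝ := Real.sinh t / Real.cosh t

lemma th_pos {t : ℝ} (ht : 0 < t) : 0 < th t :=
  div_pos (by rwa [Real.sinh_pos_iff]) (Real.cosh_pos t)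

lemma th_lt_one (t : ℝ) : th t < 1 := by
  rw [th, div_lt_one (Real.cosh_pos t), ← sub_pos]
  rw [Real.cosh_sub_sinh]
  positivity

lemma one_sub_th_sq_pos (t : ℝ) (ht : 0 < t) : 0 < 1 - th t ^ 2 := by
  have h1 := th_lt_one t
  have h2 := th_pos ht
  nlinarith

lemma hasDerivAt_th (t : ℝ) : HasDerivAt th (1 - th t ^ 2) t := by
  have h := (Real.hasDerivAt_sinh t).div (Real.hasDerivAt_cosh t) (ne_of_gt (Real.cosh_pos t))
  refine h.congr_deriv ?_
  have hc : Real.cosh t ≠ 0 := ne_of_gt (Real.cosh_pos t)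
  rw [th]
  field_simp

lemma th_eq_exp (t : ℝ) : th t = (Real.exp (2*t) - 1) / (Real.exp (2*t) + 1) := by
  have h1 : Real.exp (2*t) = Real.exp t * Real.exp t := by
    rw [two_mul, Real.exp_add]
  have he : (0:ℝ) < Real.exp t := Real.exp_pos t
  rw [th, Real.sinh_eq, Real.cosh_eq, h1]
  rw [div_eq_div_iff (by positivity) (by positivity)]
  have h2 : Real.exp (-t) = (Real.exp t)⁻¹ := by rw [Real.exp_neg]
  rw [h2]
  field_simp

lemma psi_th (t : ℝ) : (1/2 : ℝ) * Real.log ((1 + th t) / (1 - th t)) = t := by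
  have hc : (0:ℝ) < Real.cosh t := Real.cosh_pos t
  have hcs : Real.cosh t - Real.sinh t = Real.exp (-t) := Real.cosh_sub_sinh t
  have hca : Real.cosh t + Real.sinh t = Real.exp t := Real.cosh_add_sinh t
  have hne : Real.cosh t - Real.sinh t ≠ 0 := by rw [hcs]; positivity
  have key : (1 + th t) / (1 - th t) = Real.exp t / Real.exp (-t) := by
    rw [← hcs, ← hca, th]
    field_simp
  rw [key, ← Real.exp_sub, Real.log_exp]
  ring

lemma th_injOn : InjOn th (Ioi (0:ℝ)) := by
  intro s _ t _ h
  have := congrArg (fun u => (1/2 : ℝ) * Real.log ((1 + u) / (1 - u))) h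
  simpa only [psi_th] using this

lemma th_image : th '' (Ioi (0:ℝ)) = Ioo (0:ℝ) 1 := by
  ext u
  constructor
  · rintro ⟨t, ht, rfl⟩
    exact ⟨th_pos ht, th_lt_one t⟩
  · rintro ⟨hu0, hu1⟩
    have h1u : (0:ℝ) < 1 - u := by linarith
    have hr : (0:ℝ) < (1 + u) / (1 - u) := by positivity
    have hr1 : (1:ℝ) < (1 + u) / (1 - u) := by
      rw [lt_div_iff₀ h1u]; linarith
    refine ⟨(1/2) * Real.log ((1 + u) / (1 - u)), ?_, ?_⟩
    · have : (0:ℝ) < Real.log ((1 + u) / (1 - u)) := Real.log_pos hr1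
      simpa using by positivity
    · rw [th_eq_exp]
      have h2 : 2 * ((1/2 : ℝ) * Real.log ((1 + u) / (1 - u))) = Real.log ((1+u)/(1-u)) := by ring
      rw [h2, Real.exp_log hr]
      field_simp
      ring

lemma sinh_two_eq_th (t : ℝ) (ht : 0 < t) :
    Real.sinh (2*t) = 2 * th t / (1 - th t ^ 2) := by
  have hc : (0:ℝ) < Real.cosh t := Real.cosh_pos t
  have hsq : Real.cosh t ^ 2 - Real.sinh t ^ 2 = 1 := Real.cosh_sq_sub_sinh_sq t
  rw [eq_div_iff (ne_of_gt (one_sub_th_sq_pos t ht)), th, Real.sinh_two_mul]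
  field_simp
  nlinarith [hsq]

lemma cosh_div_sinh_two_eq_th (t : ℝ) (ht : 0 < t) :
    Real.cosh (2*t) / Real.sinh (2*t) = (1 + th t ^ 2) / (2 * th t) := by
  have hc : (0:ℝ) < Real.cosh t := Real.cosh_pos t
  have hs : (0:ℝ) < Real.sinh t := by rwa [Real.sinh_pos_iff]
  have hsq : Real.cosh t ^ 2 - Real.sinh t ^ 2 = 1 := Real.cosh_sq_sub_sinh_sq t
  have hs2 : (0:ℝ) < Real.sinh (2*t) := by
    rw [Real.sinh_pos_iff]; positivity
  have hth : (0:ℝ) < th t := th_pos ht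
  rw [div_eq_div_iff (ne_of_gt hs2) (by positivity), th, Real.sinh_two_mul, Real.cosh_two_mul]
  field_simp

lemma int_one_add (e : ℝ) (he : -1 < e) (a b : ℝ) :
    IntervalIntegrable (fun s : ℝ => (1+s)^e) volume a b := by
  have h := (intervalIntegrable_rpow' (a := a+1) (b := b+1) he).comp_add_right 1
  simpa [add_comm] using h

lemma int_one_sub (e : ℝ) (he : -1 < e) (a b : ℝ) :
    IntervalIntegrable (fun s : ℝ => (1-s)^e) volume a b := by
  have h := (intervalIntegrable_rpow' (a := 1-a) (b := 1-b) he).comp_sub_left 1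
  simpa using h

lemma w_eq (e s : ℝ) (h1 : -1 ≤ s) (h2 : s ≤ 1) :
    ((1:ℝ)-s^2)^e = (1-s)^e * (1+s)^e := by
  have : (1:ℝ)-s^2 = (1-s)*(1+s) := by ring
  rw [this, Real.mul_rpow (by linarith) (by linarith)]

lemma wInt_left (e : ℝ) (he : -1 < e) :
    IntervalIntegrable (fun s : ℝ => (1-s^2)^e) volume (-1) 0 := by
  have hg : IntervalIntegrable (fun s : ℝ => (1-s)^e * (1+s)^e) volume (-1) 0 := by
    apply (int_one_add e he (-1) 0).continuousOn_mul
    apply ContinuousOn.rpow_const (by fun_prop)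
    intro s hs
    left
    have : s ≤ 0 := by
      rcases hs with ⟨_, hs2⟩
      simpa using hs2
    intro hcon
    nlinarith [hcon]
  apply hg.congr
  intro s hs
  obtain ⟨hs1, hs2⟩ := hs
  have h1 : (-1:ℝ) < s := by simpa using hs1
  have h2 : s ≤ (0:ℝ) := by simpa using hs2
  exact (w_eq e s h1.le (by linarith)).symm

lemma wInt_right (e : ℝ) (he : -1 < e) :
    IntervalIntegrable (fun s : ℝ => (1-s^2)^e) volume 0 1 := by
  have hg : IntervalIntegrable (fun s : ℝ => (1+s)^e * (1-s)^e) volume 0 1 := by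
    apply (int_one_sub e he 0 1).continuousOn_mul
    apply ContinuousOn.rpow_const (by fun_prop)
    intro s hs
    left
    have : 0 ≤ s := by
      rcases hs with ⟨hs1, _⟩
      simpa using hs1
    intro hcon
    nlinarith [hcon]
  apply hg.congr
  intro s hs
  obtain ⟨hs1, hs2⟩ := hs
  have h1 : (0:ℝ) < s := by simpa using hs1
  have h2 : s ≤ (1:ℝ) := by simpa using hs2
  show (1 + s) ^ e * (1 - s) ^ e = (1 - s ^ 2) ^ e
  rw [mul_comm]
  exact (w_eq e s (by linarith) h2).symm

lemma wInt (e : ℝ) (he : -1 < e) {a b : ℝ} (ha : a ∈ Icc (-1:ℝ) 1) (hb : b ∈ Icc (-1:ℝ) 1) :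
    IntervalIntegrable (fun s : ℝ => (1-s^2)^e) volume a b := by
  apply ((wInt_left e he).trans (wInt_right e he)).mono_set
  rw [uIcc_of_le (by norm_num : (-1:ℝ) ≤ 1)]
  exact uIcc_subset_Icc ha hb

lemma Fint (e z : ℝ) (he : -1 < e) {a b : ℝ} (ha : a ∈ Icc (-1:ℝ) 1) (hb : b ∈ Icc (-1:ℝ) 1) :
    IntervalIntegrable (fun s : ℝ => Real.exp (-z*s) * (1-s^2)^e) volume a b :=
  (wInt e he ha hb).continuousOn_mul (by fun_prop)

lemma gamma_int (p z : ℝ) (hp : 0 < p) (hz : 0 < z) :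
    IntegrableOn (fun u : ℝ => Real.exp (-(z*u)) * u^(p-1)) (Ioi 0) := by
  have h0 : IntegrableOn (fun x : ℝ => Real.exp (-x) * x ^ (p - 1)) (Ioi 0) :=
    Real.GammaIntegral_convergent hp
  have h1 : IntegrableOn (fun u : ℝ => Real.exp (-(z*u)) * (z*u) ^ (p - 1)) (Ioi 0) := by
    have := (integrableOn_Ioi_comp_mul_left_iff
      (fun x : ℝ => Real.exp (-x) * x ^ (p - 1)) 0 hz).mpr (by simpa using h0)
    simpa using this
  have h2 : IntegrableOn (fun u : ℝ => z ^ (1-p) * (Real.exp (-(z*u)) * (z*u) ^ (p - 1))) (Ioi 0) :=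
    h1.const_mul (z ^ (1-p))
  apply IntegrableOn.congr_fun h2 _ measurableSet_Ioi
  intro u hu
  have hu0 : (0:ℝ) < u := hu
  simp only []
  rw [Real.mul_rpow hz.le hu0.le]
  rw [show z ^ (1-p) * (Real.exp (-(z*u)) * (z ^ (p-1) * u ^ (p-1)))
      = (z ^ (1-p) * z ^ (p-1)) * (Real.exp (-(z*u)) * u ^ (p-1)) by ring]
  rw [← Real.rpow_add hz]
  norm_num

lemma gamma_val (p z : ℝ) (hp : 0 < p) (hz : 0 < z) :
    ∫ u in Ioi (0:ℝ), Real.exp (-(z*u)) * u^(p-1) = Real.Gamma p * z^(-p) := by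
  have h := Real.integral_rpow_mul_exp_neg_mul_Ioi hp hz
  rw [show ∫ u in Ioi (0:ℝ), Real.exp (-(z*u)) * u^(p-1)
      = ∫ u in Ioi (0:ℝ), u^(p-1) * Real.exp (-(z*u)) from by
        apply setIntegral_congr_fun measurableSet_Ioi; intro u _; ring, h]
  rw [one_div, Real.inv_rpow hz.le, ← Real.rpow_neg hz.le]
  ring

lemma Jbound (e z : ℝ) (he : -1 < e) (hz : 0 < z) :
    ∫ s in (-1:ℝ)..1, Real.exp (-z*s) * (1-s^2)^e
      ≤ 2 * max 1 (2^e) * Real.exp z * (Real.Gamma (e+1) * z^(-(e+1))) := by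
  set M : ℝ := max 1 (2^e) with hM
  have hM1 : (1:ℝ) ≤ M := le_max_left _ _
  have hmem : ∀ c : ℝ, -1 ≤ c → c ≤ 1 → c ∈ Icc (-1:ℝ) 1 := fun c h1 h2 => ⟨h1, h2⟩
  have hFl := Fint e z he (hmem _ le_rfl (by norm_num)) (hmem 0 (by norm_num) (by norm_num))
  have hFr := Fint e z he (hmem 0 (by norm_num) (by norm_num)) (hmem 1 (by norm_num) le_rfl)
  have hsplit : (∫ s in (-1:ℝ)..1, Real.exp (-z*s) * (1-s^2)^e)
      = (∫ s in (-1:ℝ)..0, Real.exp (-z*s) * (1-s^2)^e)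
        + ∫ s in (0:ℝ)..1, Real.exp (-z*s) * (1-s^2)^e :=
    (integral_add_adjacent_intervals hFl hFr).symm
  have hG : IntervalIntegrable (fun s : ℝ => Real.exp (z*s) * (1-s^2)^e) volume (-1) 0 := by
    have := Fint e (-z) he (hmem _ le_rfl (by norm_num)) (hmem 0 (by norm_num) (by norm_num))
    simpa using this
  have hrefl : (∫ s in (0:ℝ)..1, Real.exp (-z*s) * (1-s^2)^e)
      = ∫ s in (-1:ℝ)..0, Real.exp (z*s) * (1-s^2)^e := by
    have h1 := intervalIntegral.integral_comp_neg (a := (-1:ℝ)) (b := 0)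
      (fun s => Real.exp (-z*s) * (1-s^2)^e)
    simp only [neg_neg, neg_zero] at h1
    rw [← h1]
    apply intervalIntegral.integral_congr
    intro s _
    simp only [neg_sq]
    ring_nf
  have hmono1 : (∫ s in (-1:ℝ)..0, Real.exp (z*s) * (1-s^2)^e)
      ≤ ∫ s in (-1:ℝ)..0, Real.exp (-z*s) * (1-s^2)^e := by
    apply integral_mono_on (by norm_num) hG hFl
    intro s hs
    apply mul_le_mul_of_nonneg_right
    · apply Real.exp_le_exp.2
      nlinarith [hs.1, hs.2]
    · apply Real.rpow_nonneg
      nlinarith [hs.1, hs.2]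
  have hRint : IntervalIntegrable
      (fun s : ℝ => (M * Real.exp z) * (Real.exp (-(z*(1+s))) * (1+s)^e)) volume (-1) 0 := by
    apply IntervalIntegrable.const_mul
    exact (int_one_add e he (-1) 0).continuousOn_mul (by fun_prop)
  have hmono2 : (∫ s in (-1:ℝ)..0, Real.exp (-z*s) * (1-s^2)^e)
      ≤ ∫ s in (-1:ℝ)..0, (M * Real.exp z) * (Real.exp (-(z*(1+s))) * (1+s)^e) := by
    apply integral_mono_on (by norm_num) hFl hRint
    intro s hs
    obtain ⟨hs1, hs2⟩ := hs
    rw [w_eq e s hs1 (by linarith)]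
    have h1s : (1:ℝ) ≤ 1 - s := by linarith
    have hup : (1-s)^e ≤ M := by
      rcases le_or_gt 0 e with h | h
      · exact le_trans (Real.rpow_le_rpow (by linarith) (by linarith) h) (le_max_right _ _)
      · exact le_trans (Real.rpow_le_one_of_one_le_of_nonpos h1s h.le) (le_max_left _ _)
    have hexp : Real.exp (-z*s) = Real.exp z * Real.exp (-(z*(1+s))) := by
      rw [← Real.exp_add]; ring_nf
    rw [hexp]
    have h1 : (0:ℝ) ≤ (1+s)^e := Real.rpow_nonneg (by linarith) e
    have h2 : (0:ℝ) ≤ Real.exp z * Real.exp (-(z*(1+s))) := by positivity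
    calc Real.exp z * Real.exp (-(z*(1+s))) * ((1-s)^e * (1+s)^e)
        ≤ Real.exp z * Real.exp (-(z*(1+s))) * (M * (1+s)^e) := by
          apply mul_le_mul_of_nonneg_left _ h2
          exact mul_le_mul_of_nonneg_right hup h1
      _ = (M * Real.exp z) * (Real.exp (-(z*(1+s))) * (1+s)^e) := by ring
  have hshift : (∫ s in (-1:ℝ)..0, Real.exp (-(z*(1+s))) * (1+s)^e)
      = ∫ u in (0:ℝ)..1, Real.exp (-(z*u)) * u^e := by
    have h := intervalIntegral.integral_comp_add_right (a := (-1:ℝ)) (b := 0)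
      (fun u => Real.exp (-(z*u)) * u^e) 1
    simp only [neg_add_cancel, zero_add] at h
    rw [← h]
    apply intervalIntegral.integral_congr
    intro s _
    simp only [add_comm s 1]
  have hioi : (∫ u in (0:ℝ)..1, Real.exp (-(z*u)) * u^e)
      ≤ ∫ u in Ioi (0:ℝ), Real.exp (-(z*u)) * u^e := by
    rw [intervalIntegral.integral_of_le (by norm_num)]
    apply setIntegral_mono_set
    · have := gamma_int (e+1) z (by linarith) hz
      simpa using this
    · filter_upwards [ae_restrict_mem measurableSet_Ioi] with u hu
      simp only [Pi.zero_apply]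
      have : (0:ℝ) < u := hu
      positivity
    · exact (Ioc_subset_Ioi_self).eventuallyLE
  have hval : (∫ u in Ioi (0:ℝ), Real.exp (-(z*u)) * u^e) = Real.Gamma (e+1) * z^(-(e+1)) := by
    have := gamma_val (e+1) z (by linarith) hz
    simpa using this
  have key : (∫ s in (-1:ℝ)..0, Real.exp (-z*s) * (1-s^2)^e)
      ≤ (M * Real.exp z) * (Real.Gamma (e+1) * z^(-(e+1))) := by
    calc (∫ s in (-1:ℝ)..0, Real.exp (-z*s) * (1-s^2)^e)
        ≤ ∫ s in (-1:ℝ)..0, (M * Real.exp z) * (Real.exp (-(z*(1+s))) * (1+s)^e) := hmono2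
      _ = (M * Real.exp z) * ∫ s in (-1:ℝ)..0, Real.exp (-(z*(1+s))) * (1+s)^e := by
          rw [intervalIntegral.integral_const_mul]
      _ ≤ (M * Real.exp z) * (Real.Gamma (e+1) * z^(-(e+1))) := by
          apply mul_le_mul_of_nonneg_left _ (by positivity)
          rw [hshift]
          exact le_trans hioi (le_of_eq hval)
  calc (∫ s in (-1:ℝ)..1, Real.exp (-z*s) * (1-s^2)^e)
      = (∫ s in (-1:ℝ)..0, Real.exp (-z*s) * (1-s^2)^e)
        + ∫ s in (0:ℝ)..1, Real.exp (-z*s) * (1-s^2)^e := hsplit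
    _ ≤ (∫ s in (-1:ℝ)..0, Real.exp (-z*s) * (1-s^2)^e)
        + ∫ s in (-1:ℝ)..0, Real.exp (-z*s) * (1-s^2)^e := by
          rw [hrefl]; exact add_le_add_right hmono1 _
    _ ≤ (M * Real.exp z) * (Real.Gamma (e+1) * z^(-(e+1)))
        + (M * Real.exp z) * (Real.Gamma (e+1) * z^(-(e+1))) := add_le_add key key
    _ = 2 * M * Real.exp z * (Real.Gamma (e+1) * z^(-(e+1))) := by ring

lemma Jlow (e z : ℝ) (he : -1 < e) (hz : 1 ≤ z) :
    Real.exp (z-1) * min 1 (2^e) * ((1/z)^(e+1) / (e+1))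
      ≤ ∫ s in (-1:ℝ)..1, Real.exp (-z*s) * (1-s^2)^e := by
  have hz0 : (0:ℝ) < z := by linarith
  set c : ℝ := -1 + 1/z with hc
  have h1z : (0:ℝ) < 1/z := by positivity
  have h1z1 : 1/z ≤ 1 := by
    rw [div_le_one hz0]; exact hz
  have hc0 : c ≤ 0 := by rw [hc]; linarith
  have hcm : c ∈ Icc (-1:ℝ) 1 := ⟨by rw [hc]; linarith, by rw [hc]; linarith⟩
  have hmem : ∀ d : ℝ, -1 ≤ d → d ≤ 1 → d ∈ Icc (-1:ℝ) 1 := fun d u v => ⟨u, v⟩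
  have hFl := Fint e z he (hmem _ le_rfl (by norm_num)) hcm
  have hFr := Fint e z he hcm (hmem 1 (by norm_num) le_rfl)
  have hsplit : (∫ s in (-1:ℝ)..1, Real.exp (-z*s) * (1-s^2)^e)
      = (∫ s in (-1:ℝ)..c, Real.exp (-z*s) * (1-s^2)^e)
        + ∫ s in c..(1:ℝ), Real.exp (-z*s) * (1-s^2)^e :=
    (integral_add_adjacent_intervals hFl hFr).symm
  have hnn2 : (0:ℝ) ≤ ∫ s in c..(1:ℝ), Real.exp (-z*s) * (1-s^2)^e := by
    apply intervalIntegral.integral_nonneg (by linarith [hcm.2])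
    intro s hs
    have h1 : (0:ℝ) ≤ 1 - s^2 := by nlinarith [hs.1, hs.2, hcm.1]
    positivity
  set m : ℝ := min 1 (2^e) with hm
  have hm0 : (0:ℝ) < m := by
    apply lt_min one_pos (by positivity)
  have hLint : IntervalIntegrable
      (fun s : ℝ => (Real.exp (z-1) * m) * (1+s)^e) volume (-1) c :=
    (int_one_add e he (-1) c).const_mul _
  have hmono : (∫ s in (-1:ℝ)..c, (Real.exp (z-1) * m) * (1+s)^e)
      ≤ ∫ s in (-1:ℝ)..c, Real.exp (-z*s) * (1-s^2)^e := by
    apply integral_mono_on hcm.1 hLint hFl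
    intro s hs
    obtain ⟨hs1, hs2⟩ := hs
    have hs3 : s ≤ 1 := by linarith
    rw [w_eq e s hs1 hs3]
    have hexp : Real.exp (z-1) ≤ Real.exp (-z*s) := by
      apply Real.exp_le_exp.2
      have : z * s ≤ z * c := mul_le_mul_of_nonneg_left hs2 hz0.le
      have hzc : z * c = -z + 1 := by
        rw [hc]; field_simp
      nlinarith
    have h1s : (1:ℝ) ≤ 1 - s := by linarith
    have h2s : 1 - s ≤ 2 := by linarith
    have hlow : m ≤ (1-s)^e := by
      rcases le_or_gt 0 e with h | h
      · refine le_trans (min_le_left _ _) ?_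
        calc (1:ℝ) = 1^e := (Real.one_rpow e).symm
          _ ≤ (1-s)^e := Real.rpow_le_rpow (by norm_num) h1s h
      · refine le_trans (min_le_right _ _) ?_
        exact Real.rpow_le_rpow_of_nonpos (by linarith) h2s h.le
    have h1 : (0:ℝ) ≤ (1+s)^e := Real.rpow_nonneg (by linarith) e
    calc Real.exp (z-1) * m * (1+s)^e
        ≤ Real.exp (-z*s) * (1-s)^e * (1+s)^e := by
          apply mul_le_mul_of_nonneg_right _ h1
          exact mul_le_mul hexp hlow hm0.le (Real.exp_pos _).le
      _ = Real.exp (-z*s) * ((1-s)^e * (1+s)^e) := by ring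
  have hval : (∫ s in (-1:ℝ)..c, (Real.exp (z-1) * m) * (1+s)^e)
      = Real.exp (z-1) * m * ((1/z)^(e+1) / (e+1)) := by
    rw [intervalIntegral.integral_const_mul]
    congr 1
    have h := intervalIntegral.integral_comp_add_right (a := (-1:ℝ)) (b := c)
      (fun u : ℝ => u^e) 1
    simp only [neg_add_cancel] at h
    have hcc : c + 1 = 1/z := by rw [hc]; ring
    rw [hcc] at h
    have h2 : (∫ s in (-1:ℝ)..c, (1+s)^e) = ∫ s in (-1:ℝ)..c, (s+1)^e := by
      apply intervalIntegral.integral_congr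
      intro s _
      simp [add_comm]
    rw [h2, h, integral_rpow (Or.inl he), Real.zero_rpow (by linarith : e+1 ≠ 0)]
    ring
  calc Real.exp (z-1) * m * ((1/z)^(e+1) / (e+1))
      = ∫ s in (-1:ℝ)..c, (Real.exp (z-1) * m) * (1+s)^e := hval.symm
    _ ≤ ∫ s in (-1:ℝ)..c, Real.exp (-z*s) * (1-s^2)^e := hmono
    _ ≤ (∫ s in (-1:ℝ)..c, Real.exp (-z*s) * (1-s^2)^e)
        + ∫ s in c..(1:ℝ), Real.exp (-z*s) * (1-s^2)^e := by linarith
    _ = ∫ s in (-1:ℝ)..1, Real.exp (-z*s) * (1-s^2)^e := hsplit.symm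

lemma lagHeatC_eq (β t x y : ℝ) (hx : 0 < x) (hy : 0 < y) (ht : 0 < t) :
    lagHeatC β t x y =
      Real.sinh (2*t) ^ (-1-β)
        * Real.exp (-(1/2) * (Real.cosh (2*t) / Real.sinh (2*t)) * (x^2+y^2))
        * (∫ s in (-1:ℝ)..1, Real.exp (-(x*y/Real.sinh (2*t))*s) * (1-s^2)^(β-1/2))
        / (2^β * Real.sqrt Real.pi * Real.Gamma (β+1/2)) := by
  have hxy : (0:ℝ) < x*y := mul_pos hx hy
  have hsh : (0:ℝ) < Real.sinh (2*t) := by rw [Real.sinh_pos_iff]; positivity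
  set A : ℝ := -(1/2) * (Real.cosh (2*t) / Real.sinh (2*t)) * (x^2+y^2) with hA
  set N : ℝ := 2^β * Real.sqrt Real.pi * Real.Gamma (β+1/2) with hN
  have hint : (∫ s in (-1:ℝ)..1,
      Real.exp (A - x * y * s / Real.sinh (2*t)) * ((1 - s ^ 2) ^ (β - 1/2) / N))
      = (Real.exp A / N) * ∫ s in (-1:ℝ)..1,
          Real.exp (-(x*y/Real.sinh (2*t))*s) * (1-s^2)^(β-1/2) := by
    rw [← intervalIntegral.integral_const_mul]
    apply intervalIntegral.integral_congr
    intro s _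
    show Real.exp (A - x * y * s / Real.sinh (2*t)) * ((1 - s ^ 2) ^ (β - 1/2) / N)
      = Real.exp A / N * (Real.exp (-(x*y/Real.sinh (2*t))*s) * (1-s^2)^(β-1/2))
    have h1 : A - x * y * s / Real.sinh (2*t) = A + (-(x*y/Real.sinh (2*t))*s) := by ring
    rw [h1, Real.exp_add]
    ring
  rw [lagHeatC, lagHeatH, ← hA, ← hN, hint]
  rw [show (x*y) ^ (-β-1/2) * ((x*y)^(β+1/2) * Real.sinh (2*t) ^ (-1-β)
      * ((Real.exp A / N) * ∫ s in (-1:ℝ)..1,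
          Real.exp (-(x*y/Real.sinh (2*t))*s) * (1-s^2)^(β-1/2)))
      = ((x*y) ^ (-β-1/2) * (x*y)^(β+1/2)) * (Real.sinh (2*t) ^ (-1-β) * Real.exp A
        * (∫ s in (-1:ℝ)..1,
          Real.exp (-(x*y/Real.sinh (2*t))*s) * (1-s^2)^(β-1/2)) / N) from by ring]
  rw [← Real.rpow_add hxy]
  norm_num

lemma exp_ident (t x y : ℝ) (ht : 0 < t) :
    -(1/2) * (Real.cosh (2*t)/Real.sinh (2*t)) * (x^2+y^2) + x*y/Real.sinh (2*t)
      = -(x-y)^2/(4*th t) - th t*(x+y)^2/4 := by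
  have hth := th_pos ht
  have h2 := one_sub_th_sq_pos t ht
  rw [cosh_div_sinh_two_eq_th t ht, sinh_two_eq_th t ht]
  field_simp
  ring

lemma zpow_split (x y sh q : ℝ) (hxy : 0 < x*y) (hsh : 0 < sh) :
    (x*y/sh) ^ q = (x*y)^q * sh^(-q) := by
  rw [div_eq_mul_inv, Real.mul_rpow hxy.le (inv_nonneg.2 hsh.le),
    Real.inv_rpow hsh.le, ← Real.rpow_neg hsh.le]

lemma lagHeatC_nonneg (β t x y : ℝ) (hβ : -(1/2:ℝ) < β) (hx : 0 < x) (hy : 0 < y)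
    (ht : 0 < t) : 0 ≤ lagHeatC β t x y := by
  rw [lagHeatC_eq β t x y hx hy ht]
  have hΓ : (0:ℝ) < Real.Gamma (β+1/2) := Real.Gamma_pos_of_pos (by linarith)
  have hsh : (0:ℝ) < Real.sinh (2*t) := by rw [Real.sinh_pos_iff]; positivity
  have hint : (0:ℝ) ≤ ∫ s in (-1:ℝ)..1,
      Real.exp (-(x*y/Real.sinh (2*t))*s) * (1-s^2)^(β-1/2) := by
    apply intervalIntegral.integral_nonneg (by norm_num)
    intro s hs
    have h1 : (0:ℝ) ≤ 1 - s^2 := by nlinarith [hs.1, hs.2]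
    positivity
  have h1 : (0:ℝ) ≤ Real.sinh (2*t) ^ (-1-β) := Real.rpow_nonneg hsh.le _
  have h2 : (0:ℝ) < (2:ℝ)^β := Real.rpow_pos_of_pos (by norm_num) β
  have hπ : (0:ℝ) < Real.sqrt Real.pi := Real.sqrt_pos.2 Real.pi_pos
  positivity

lemma step1 (α β x y t : ℝ) (hα : -(1/2:ℝ) < α) (hβα : α ≤ β)
    (hx : 0 < x) (hy : 0 < y) (ht : 0 < t) :
    (x*y)^(β-α) * lagHeatC β t x y
      ≤ (2 * Real.sqrt 2 / Real.sqrt Real.pi) * ((x*y)^(-α-1/2)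
        * Real.sinh (2*t) ^ (-(1:ℝ)/2)
        * Real.exp (-(x-y)^2/(4*th t) - th t*(x+y)^2/4)) := by
  have hβ : -(1/2:ℝ) < β := lt_of_lt_of_le hα hβα
  have hxy : (0:ℝ) < x*y := mul_pos hx hy
  have hsh : (0:ℝ) < Real.sinh (2*t) := by rw [Real.sinh_pos_iff]; positivity
  set z : ℝ := x*y/Real.sinh (2*t) with hzdef
  have hz : 0 < z := div_pos hxy hsh
  set e : ℝ := β - 1/2 with hedef
  have he : (-1:ℝ) < e := by rw [hedef]; linarith
  have hΓ : (0:ℝ) < Real.Gamma (β+1/2) := Real.Gamma_pos_of_pos (by linarith)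
  have hπ : (0:ℝ) < Real.sqrt Real.pi := Real.sqrt_pos.2 Real.pi_pos
  have h2β : (0:ℝ) < (2:ℝ)^β := Real.rpow_pos_of_pos (by norm_num) β
  set A : ℝ := -(1/2) * (Real.cosh (2*t) / Real.sinh (2*t)) * (x^2+y^2) with hA
  set J : ℝ := ∫ s in (-1:ℝ)..1, Real.exp (-z*s) * (1-s^2)^e with hJ
  have heq : (x*y)^(β-α) * lagHeatC β t x y
      = ((x*y)^(β-α) * Real.sinh (2*t) ^ (-1-β) * Real.exp A
          / (2^β * Real.sqrt Real.pi * Real.Gamma (β+1/2))) * J := by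
    rw [lagHeatC_eq β t x y hx hy ht, ← hA, ← hzdef, ← hedef, ← hJ]
    ring
  have hP : (0:ℝ) < (x*y)^(β-α) * Real.sinh (2*t) ^ (-1-β) * Real.exp A
      / (2^β * Real.sqrt Real.pi * Real.Gamma (β+1/2)) := by positivity
  have hJb : J ≤ 2 * max 1 (2^e) * Real.exp z * (Real.Gamma (β+1/2) * z^(-(β+1/2))) := by
    have := Jbound e z he hz
    rw [hJ]
    convert this using 4 <;> rw [hedef] <;> ring_nf
  have step : (x*y)^(β-α) * lagHeatC β t x y
      ≤ ((x*y)^(β-α) * Real.sinh (2*t) ^ (-1-β) * Real.exp A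
          / (2^β * Real.sqrt Real.pi * Real.Gamma (β+1/2)))
        * (2 * max 1 (2^e) * Real.exp z * (Real.Gamma (β+1/2) * z^(-(β+1/2)))) := by
    rw [heq]
    exact mul_le_mul_of_nonneg_left hJb hP.le
  refine le_trans step ?_
  have hzp : z^(-(β+1/2)) = (x*y)^(-(β+1/2)) * Real.sinh (2*t)^(β+1/2) := by
    rw [hzdef, zpow_split x y _ _ hxy hsh]
    norm_num
  have hxyp : (x*y)^(β-α) * (x*y)^(-(β+1/2)) = (x*y)^(-α-1/2) := by
    rw [← Real.rpow_add hxy]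
    norm_num
    ring_nf
  have hshp : Real.sinh (2*t) ^ (-1-β) * Real.sinh (2*t)^(β+1/2)
      = Real.sinh (2*t) ^ (-(1:ℝ)/2) := by
    rw [← Real.rpow_add hsh]
    norm_num
    ring_nf
  have hexp : Real.exp A * Real.exp z = Real.exp (-(x-y)^2/(4*th t) - th t*(x+y)^2/4) := by
    rw [← Real.exp_add, hA, hzdef, exp_ident t x y ht]
  have hMle : max 1 (2^e) ≤ Real.sqrt 2 * 2^β := by
    have hs2 : Real.sqrt 2 = (2:ℝ)^(1/2:ℝ) := Real.sqrt_eq_rpow 2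
    apply max_le
    · rw [hs2, ← Real.rpow_add (by norm_num : (0:ℝ) < 2), ← Real.rpow_zero 2]
      apply Real.rpow_le_rpow_left_iff (by norm_num : (1:ℝ) < 2) |>.2
      linarith
    · rw [hs2, hedef, ← Real.rpow_add (by norm_num : (0:ℝ) < 2)]
      apply Real.rpow_le_rpow_left_iff (by norm_num : (1:ℝ) < 2) |>.2
      linarith
  have hB : (0:ℝ) ≤ (x*y)^(-α-1/2) * Real.sinh (2*t) ^ (-(1:ℝ)/2)
      * Real.exp (-(x-y)^2/(4*th t) - th t*(x+y)^2/4) := by positivity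
  have hgen : ∀ (G S u v E1 : ℝ), G ≠ 0 → S ≠ 0 →
      (u / (S*G)) * (2 * max 1 (2^e) * E1 * (G*v)) = (2 * max 1 (2^e) / S) * (u*v*E1) := by
    intro G S u v E1 hG hS
    field_simp
  calc ((x*y)^(β-α) * Real.sinh (2*t) ^ (-1-β) * Real.exp A
          / (2^β * Real.sqrt Real.pi * Real.Gamma (β+1/2)))
        * (2 * max 1 (2^e) * Real.exp z * (Real.Gamma (β+1/2) * z^(-(β+1/2))))
      = (2 * max 1 (2^e) / (2^β * Real.sqrt Real.pi))
        * (((x*y)^(β-α) * Real.sinh (2*t) ^ (-1-β) * Real.exp A) * z^(-(β+1/2)) * Real.exp z) :=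
        hgen (Real.Gamma (β+1/2)) (2^β * Real.sqrt Real.pi) _ _ _ hΓ.ne' (by positivity)
    _ = (2 * max 1 (2^e) / (2^β * Real.sqrt Real.pi))
        * (((x*y)^(β-α) * (x*y)^(-(β+1/2)))
          * (Real.sinh (2*t) ^ (-1-β) * Real.sinh (2*t)^(β+1/2))
          * (Real.exp A * Real.exp z)) := by
        rw [hzp]; ring
    _ = (2 * max 1 (2^e) / (2^β * Real.sqrt Real.pi))
        * ((x*y)^(-α-1/2) * Real.sinh (2*t) ^ (-(1:ℝ)/2)
          * Real.exp (-(x-y)^2/(4*th t) - th t*(x+y)^2/4)) := by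
        rw [hxyp, hshp, hexp]
    _ ≤ (2 * Real.sqrt 2 / Real.sqrt Real.pi)
        * ((x*y)^(-α-1/2) * Real.sinh (2*t) ^ (-(1:ℝ)/2)
          * Real.exp (-(x-y)^2/(4*th t) - th t*(x+y)^2/4)) := by
        apply mul_le_mul_of_nonneg_right _ hB
        rw [div_le_div_iff₀ (by positivity) hπ]
        calc 2 * max 1 (2^e) * Real.sqrt Real.pi
            ≤ 2 * (Real.sqrt 2 * 2^β) * Real.sqrt Real.pi := by
              apply mul_le_mul_of_nonneg_right _ hπ.le
              nlinarith [hMle]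
          _ = 2 * Real.sqrt 2 * (2^β * Real.sqrt Real.pi) := by ring

lemma step1low (β x y t : ℝ) (hβ : -(1/2:ℝ) < β) (hx : 0 < x) (hy : 0 < y) (ht : 0 < t)
    (hz1 : 1 ≤ x*y/Real.sinh (2*t)) :
    (Real.exp (-1) * min 1 (2^(β-1/2:ℝ))
        / ((β+1/2) * (2^β * Real.sqrt Real.pi * Real.Gamma (β+1/2))))
      * ((x*y)^(-β-1/2) * Real.sinh (2*t) ^ (-(1:ℝ)/2)
        * Real.exp (-(x-y)^2/(4*th t) - th t*(x+y)^2/4))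
      ≤ lagHeatC β t x y := by
  have hxy : (0:ℝ) < x*y := mul_pos hx hy
  have hsh : (0:ℝ) < Real.sinh (2*t) := by rw [Real.sinh_pos_iff]; positivity
  set z : ℝ := x*y/Real.sinh (2*t) with hzdef
  have hz : 0 < z := div_pos hxy hsh
  set e : ℝ := β - 1/2 with hedef
  have he : (-1:ℝ) < e := by rw [hedef]; linarith
  have hΓ : (0:ℝ) < Real.Gamma (β+1/2) := Real.Gamma_pos_of_pos (by linarith)
  have hπ : (0:ℝ) < Real.sqrt Real.pi := Real.sqrt_pos.2 Real.pi_pos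
  have h2β : (0:ℝ) < (2:ℝ)^β := Real.rpow_pos_of_pos (by norm_num) β
  have hb2 : (0:ℝ) < β + 1/2 := by linarith
  have hm : (0:ℝ) < min 1 (2^e) := lt_min one_pos (by positivity)
  set A : ℝ := -(1/2) * (Real.cosh (2*t) / Real.sinh (2*t)) * (x^2+y^2) with hA
  set J : ℝ := ∫ s in (-1:ℝ)..1, Real.exp (-z*s) * (1-s^2)^e with hJ
  have heq : lagHeatC β t x y
      = (Real.sinh (2*t) ^ (-1-β) * Real.exp A
          / (2^β * Real.sqrt Real.pi * Real.Gamma (β+1/2))) * J := by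
    rw [lagHeatC_eq β t x y hx hy ht, ← hA, ← hzdef, ← hedef, ← hJ]
    ring
  have hP : (0:ℝ) < Real.sinh (2*t) ^ (-1-β) * Real.exp A
      / (2^β * Real.sqrt Real.pi * Real.Gamma (β+1/2)) := by positivity
  have hJl : Real.exp (z-1) * min 1 (2^e) * ((1/z)^(e+1)/(e+1)) ≤ J := by
    rw [hJ]; exact Jlow e z he hz1
  have he1 : (1/z)^(e+1)/(e+1) = z^(-β-1/2)/(β+1/2) := by
    rw [one_div, Real.inv_rpow hz.le, ← Real.rpow_neg hz.le,
      show -(e+1) = -β-1/2 from by rw [hedef]; ring,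
      show e+1 = β+1/2 from by rw [hedef]; ring]
  rw [he1] at hJl
  have hzp : z^(-β-1/2) = (x*y)^(-β-1/2) * Real.sinh (2*t)^(β+1/2) := by
    rw [hzdef, zpow_split x y _ _ hxy hsh,
      show -(-β-1/2) = β+1/2 from by ring]
  have hshp : Real.sinh (2*t) ^ (-1-β) * Real.sinh (2*t)^(β+1/2)
      = Real.sinh (2*t) ^ (-(1:ℝ)/2) := by
    rw [← Real.rpow_add hsh]; norm_num; ring_nf
  have hexp : Real.exp A * Real.exp (z-1)
      = Real.exp (-1) * Real.exp (-(x-y)^2/(4*th t) - th t*(x+y)^2/4) := by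
    rw [← Real.exp_add, ← Real.exp_add]
    congr 1
    rw [show A + (z - 1) = (A + z) + (-1) from by ring, hA, hzdef, exp_ident t x y ht]
    ring
  have hrearr : (Real.exp (-1) * min 1 (2^(β-1/2:ℝ))
        / ((β+1/2) * (2^β * Real.sqrt Real.pi * Real.Gamma (β+1/2))))
      * ((x*y)^(-β-1/2) * Real.sinh (2*t) ^ (-(1:ℝ)/2)
        * Real.exp (-(x-y)^2/(4*th t) - th t*(x+y)^2/4))
      = (min 1 (2^e) / ((β+1/2) * (2^β * Real.sqrt Real.pi * Real.Gamma (β+1/2))))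
        * ((x*y)^(-β-1/2) * Real.sinh (2*t) ^ (-(1:ℝ)/2)
          * (Real.exp (-1) * Real.exp (-(x-y)^2/(4*th t) - th t*(x+y)^2/4))) := by
    rw [hedef]; ring
  rw [heq, hrearr, ← hexp]
  refine le_trans (le_of_eq ?_) (mul_le_mul_of_nonneg_left hJl hP.le)
  rw [hzp, ← hshp]
  field_simp

lemma eq_of_sq {a b : ℝ} (ha : 0 ≤ a) (hb : 0 ≤ b) (h : a^2 = b^2) : a = b := by
  rw [← Real.sqrt_sq ha, ← Real.sqrt_sq hb, h]

lemma rpow_sq (x q : ℝ) (hx : 0 ≤ x) : (x ^ q)^2 = x^(2*q) := by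
  rw [show (2:ℝ)*q = q*2 from by ring, Real.rpow_mul hx, Real.rpow_two]

end Aux

set_option maxHeartbeats 2000000 in
open Set in
/-- for `α > −1/2`, `a ≥ 1`, `0 < σ < α+1` there is `C = C(α,σ)`
(independent of `j`) with `x^{aj} y^{aj} H_{α+aj,σ}(x,y) ≤ C \overline{K}_{α,σ}(x,y)`
for every integer `j ≥ 0` and all `x, y > 0`. -/
theorem stmt18 (α a σ : ℝ) (hα : -(1/2) < α) (ha : 1 ≤ a) (hσ0 : 0 < σ) (hσ1 : σ < α + 1) :
    ∃ C : ℝ, 0 < C ∧ ∀ j : ℕ, ∀ x y : ℝ, 0 < x → 0 < y →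
      x ^ (a * (j:ℝ)) * y ^ (a * (j:ℝ)) * potC (α + a * (j:ℝ)) σ x y ≤ C * Kbar α σ x y := by
  have hπ : (0:ℝ) < Real.sqrt Real.pi := Real.sqrt_pos.2 Real.pi_pos
  have hΓσ : (0:ℝ) < Real.Gamma σ := Real.Gamma_pos_of_pos hσ0
  set c₀ : ℝ := 2 * Real.sqrt 2 / Real.sqrt Real.pi with hc₀
  have hc₀pos : 0 < c₀ := by positivity
  have h2σpos : (0:ℝ) < (2:ℝ)^((1:ℝ)/2-σ) := Real.rpow_pos_of_pos (by norm_num) _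
  refine ⟨(Real.Gamma σ)⁻¹ * c₀ * 2^((1:ℝ)/2-σ), by positivity, ?_⟩
  intro j x y hx hy
  have hxy : (0:ℝ) < x*y := mul_pos hx hy
  set β : ℝ := α + a * (j:ℝ) with hβdef
  have hβα : α ≤ β := by
    have : 0 ≤ a * (j:ℝ) := mul_nonneg (by linarith) (Nat.cast_nonneg j)
    rw [hβdef]; linarith
  have hβ : -(1/2:ℝ) < β := lt_of_lt_of_le hα hβα
  set K : ℝ → ℝ := fun ξ =>
    (Real.log ((1 + ξ) / (1 - ξ))) ^ (σ - 1) * ξ ^ (-(1:ℝ)/2) * (1 - ξ ^ 2) ^ (-(1:ℝ)/2) *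
      Real.exp (-(x - y) ^ 2 / (4 * ξ) - ξ * (x + y) ^ 2 / 4) with hKdef
  set h₀ : ℝ → ℝ := fun t =>
    Real.sinh (2*t) ^ (-(1:ℝ)/2) * Real.exp (-(x-y)^2/(4*th t) - th t*(x+y)^2/4) * t^(σ-1)
    with hh₀def
  set g : ℝ → ℝ := fun t => lagHeatC β t x y * t^(σ-1) with hgdef
  -- basic equalities
  have hKbar_eq : Kbar α σ x y = (x*y)^(-α-1/2) * ∫ ξ in Ioo (0:ℝ) 1, K ξ := rfl
  have hpot_eq : potC β σ x y = (Real.Gamma σ)⁻¹ * ∫ t in Ioi (0:ℝ), g t := rfl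
  have hq : a * (j:ℝ) = β - α := by rw [hβdef]; ring
  have hxypow : x ^ (a*(j:ℝ)) * y ^ (a*(j:ℝ)) = (x*y)^(β-α) := by
    rw [← Real.mul_rpow hx.le hy.le, hq]
  -- nonnegativity of the K kernel
  have hKnn : ∀ ξ ∈ Ioo (0:ℝ) 1, 0 ≤ K ξ := by
    intro ξ hξ
    obtain ⟨h1, h2⟩ := hξ
    have hlog : 0 ≤ Real.log ((1+ξ)/(1-ξ)) := by
      apply Real.log_nonneg
      rw [le_div_iff₀ (by linarith)]; linarith
    have hL := Real.rpow_nonneg hlog (σ-1)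
    have h3 : (0:ℝ) ≤ ξ ^ (-(1:ℝ)/2) := Real.rpow_nonneg h1.le _
    have h4 : (0:ℝ) ≤ (1-ξ^2) ^ (-(1:ℝ)/2) := Real.rpow_nonneg (by nlinarith) _
    have h5 : (0:ℝ) < Real.exp (-(x - y) ^ 2 / (4 * ξ) - ξ * (x + y) ^ 2 / 4) := Real.exp_pos _
    rw [hKdef]
    positivity
  have hKbar_nn : 0 ≤ Kbar α σ x y := by
    rw [hKbar_eq]
    exact mul_nonneg (Real.rpow_nonneg hxy.le _)
      (setIntegral_nonneg measurableSet_Ioo hKnn)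
  -- change of variables via th
  have hder : ∀ t ∈ Ioi (0:ℝ), HasDerivWithinAt th (1 - th t^2) (Ioi 0) t :=
    fun t _ => (hasDerivAt_th t).hasDerivWithinAt
  have hIK := integrableOn_image_iff_integrableOn_abs_deriv_smul
    measurableSet_Ioi hder th_injOn K
  have hEqK := integral_image_eq_integral_abs_deriv_smul
    measurableSet_Ioi hder th_injOn K
  rw [th_image] at hIK hEqK
  -- pointwise identity
  have hid : EqOn (fun t => |1 - th t^2| • K (th t))
      (fun t => 2^(σ-(1:ℝ)/2) * h₀ t) (Ioi (0:ℝ)) := by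
    intro t ht
    have ht0 : (0:ℝ) < t := ht
    have hζ := th_pos ht0
    have hζ2 := one_sub_th_sq_pos t ht0
    have hsh : (0:ℝ) < Real.sinh (2*t) := by rw [Real.sinh_pos_iff]; positivity
    have hlog : Real.log ((1 + th t)/(1 - th t)) = 2*t := by
      have := psi_th t; linarith
    have hLpow : (Real.log ((1 + th t)/(1 - th t)))^(σ-1) = 2^(σ-1) * t^(σ-1) := by
      rw [hlog, Real.mul_rpow (by norm_num) ht0.le]
    have hfac : (1 - th t^2) * (th t ^ (-(1:ℝ)/2) * (1 - th t^2)^(-(1:ℝ)/2))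
        = 2^((1:ℝ)/2) * Real.sinh (2*t) ^ (-(1:ℝ)/2) := by
      have hL : (0:ℝ) ≤ (1 - th t^2) * (th t ^ (-(1:ℝ)/2) * (1 - th t^2)^(-(1:ℝ)/2)) := by
        have := Real.rpow_nonneg hζ.le (-(1:ℝ)/2)
        have := Real.rpow_nonneg hζ2.le (-(1:ℝ)/2)
        positivity
      have hR : (0:ℝ) ≤ 2^((1:ℝ)/2) * Real.sinh (2*t) ^ (-(1:ℝ)/2) := by
        have := Real.rpow_nonneg hsh.le (-(1:ℝ)/2)
        positivity
      apply eq_of_sq hL hR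
      rw [mul_pow, mul_pow, mul_pow, rpow_sq _ _ hζ.le, rpow_sq _ _ hζ2.le,
        rpow_sq _ _ (by norm_num : (0:ℝ) ≤ 2), rpow_sq _ _ hsh.le]
      rw [show (2:ℝ) * (-(1:ℝ)/2) = -1 from by norm_num,
        show (2:ℝ) * ((1:ℝ)/2) = 1 from by norm_num,
        Real.rpow_neg_one]
      simp only [Real.rpow_neg_one, Real.rpow_one]
      rw [sinh_two_eq_th t ht0]
      field_simp
    show |1 - th t^2| • K (th t) = 2^(σ-(1:ℝ)/2) * h₀ t
    rw [abs_of_pos hζ2, smul_eq_mul, hKdef, hh₀def]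
    show (1 - th t^2) *
        ((Real.log ((1 + th t) / (1 - th t))) ^ (σ - 1) * th t ^ (-(1:ℝ)/2)
          * (1 - th t ^ 2) ^ (-(1:ℝ)/2) *
            Real.exp (-(x - y) ^ 2 / (4 * th t) - th t * (x + y) ^ 2 / 4))
      = 2^(σ-(1:ℝ)/2) *
        (Real.sinh (2*t) ^ (-(1:ℝ)/2)
          * Real.exp (-(x-y)^2/(4*th t) - th t*(x+y)^2/4) * t^(σ-1))
    rw [hLpow]
    rw [show (1 - th t^2) *
        (2^(σ-1) * t^(σ-1) * th t ^ (-(1:ℝ)/2) * (1 - th t ^ 2) ^ (-(1:ℝ)/2) *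
          Real.exp (-(x - y) ^ 2 / (4 * th t) - th t * (x + y) ^ 2 / 4))
      = (2:ℝ)^(σ-1) * ((1 - th t^2) * (th t ^ (-(1:ℝ)/2) * (1 - th t^2)^(-(1:ℝ)/2)))
          * Real.exp (-(x - y) ^ 2 / (4 * th t) - th t * (x + y) ^ 2 / 4) * t^(σ-1)
      from by ring]
    rw [hfac, show (2:ℝ)^(σ-1) * (2^((1:ℝ)/2) * Real.sinh (2*t) ^ (-(1:ℝ)/2))
      = ((2:ℝ)^(σ-1) * 2^((1:ℝ)/2)) * Real.sinh (2*t) ^ (-(1:ℝ)/2) from by ring,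
      ← Real.rpow_add (by norm_num : (0:ℝ) < 2),
      show σ - 1 + (1:ℝ)/2 = σ - (1:ℝ)/2 from by ring]
    ring
  -- integral identity and integrability transfer
  have h2c : (0:ℝ) < (2:ℝ)^(σ-(1:ℝ)/2) := Real.rpow_pos_of_pos (by norm_num) _
  have hIK2 : IntegrableOn K (Ioo 0 1) ↔ IntegrableOn h₀ (Ioi 0) := by
    rw [hIK]
    constructor
    · intro h
      have h2 := IntegrableOn.congr_fun h hid measurableSet_Ioi
      have h3 : IntegrableOn (fun t => ((2:ℝ)^(σ-(1:ℝ)/2))⁻¹ * (2^(σ-(1:ℝ)/2) * h₀ t))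
          (Ioi 0) := h2.const_mul _
      apply IntegrableOn.congr_fun h3 _ measurableSet_Ioi
      intro t _
      field_simp
    · intro h
      have h2 : IntegrableOn (fun t => 2^(σ-(1:ℝ)/2) * h₀ t) (Ioi 0) := h.const_mul _
      exact IntegrableOn.congr_fun h2 (fun t ht => (hid ht).symm) measurableSet_Ioi
  have hEq2 : (∫ ξ in Ioo (0:ℝ) 1, K ξ) = 2^(σ-(1:ℝ)/2) * ∫ t in Ioi (0:ℝ), h₀ t := by
    rw [hEqK, setIntegral_congr_fun measurableSet_Ioi hid, integral_const_mul]
  have hgnn : ∀ t ∈ Ioi (0:ℝ), 0 ≤ g t := by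
    intro t ht
    exact mul_nonneg (lagHeatC_nonneg β t x y hβ hx hy ht)
      (Real.rpow_nonneg (le_of_lt ht) _)
  by_cases hKint : IntegrableOn K (Ioo 0 1)
  · -- main case
    have hh₀int : IntegrableOn h₀ (Ioi 0) := hIK2.mp hKint
    have hptw : ∀ t ∈ Ioi (0:ℝ), (x*y)^(β-α) * g t ≤ (c₀ * (x*y)^(-α-1/2)) * h₀ t := by
      intro t ht
      have ht0 : (0:ℝ) < t := ht
      have h1 := step1 α β x y t hα hβα hx hy ht0
      have h2 := mul_le_mul_of_nonneg_right h1 (Real.rpow_nonneg ht0.le (σ-1))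
      calc (x*y)^(β-α) * g t
          = ((x*y)^(β-α) * lagHeatC β t x y) * t^(σ-1) := by rw [hgdef]; ring
        _ ≤ ((2 * Real.sqrt 2 / Real.sqrt Real.pi) * ((x*y)^(-α-1/2)
              * Real.sinh (2*t) ^ (-(1:ℝ)/2)
              * Real.exp (-(x-y)^2/(4*th t) - th t*(x+y)^2/4))) * t^(σ-1) := h2
        _ = (c₀ * (x*y)^(-α-1/2)) * h₀ t := by rw [hc₀, hh₀def]; ring
    have hf0 : 0 ≤ᵐ[volume.restrict (Ioi (0:ℝ))] fun t => (x*y)^(β-α) * g t := by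
      rw [Filter.EventuallyLE, ae_restrict_iff' measurableSet_Ioi]
      apply Filter.Eventually.of_forall
      intro t ht
      exact mul_nonneg (Real.rpow_nonneg hxy.le _) (hgnn t ht)
    have hgi : Integrable (fun t => (c₀ * (x*y)^(-α-1/2)) * h₀ t)
        (volume.restrict (Ioi (0:ℝ))) := hh₀int.const_mul _
    have hle : (fun t => (x*y)^(β-α) * g t)
        ≤ᵐ[volume.restrict (Ioi (0:ℝ))] fun t => (c₀ * (x*y)^(-α-1/2)) * h₀ t := by
      rw [Filter.EventuallyLE, ae_restrict_iff' measurableSet_Ioi]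
      exact Filter.Eventually.of_forall hptw
    have hmain := integral_mono_of_nonneg hf0 hgi hle
    rw [integral_const_mul, integral_const_mul] at hmain
    have hH : (∫ t in Ioi (0:ℝ), h₀ t) = 2^((1:ℝ)/2-σ) * ∫ ξ in Ioo (0:ℝ) 1, K ξ := by
      rw [hEq2, ← mul_assoc, ← Real.rpow_add (by norm_num : (0:ℝ) < 2)]
      norm_num
    calc x ^ (a*(j:ℝ)) * y ^ (a*(j:ℝ)) * potC β σ x y
        = (Real.Gamma σ)⁻¹ * ((x*y)^(β-α) * ∫ t in Ioi (0:ℝ), g t) := by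
          rw [hpot_eq, hxypow]; ring
      _ ≤ (Real.Gamma σ)⁻¹ * ((c₀ * (x*y)^(-α-1/2)) * ∫ t in Ioi (0:ℝ), h₀ t) := by
          apply mul_le_mul_of_nonneg_left hmain (by positivity)
      _ = (Real.Gamma σ)⁻¹ * c₀ * 2^((1:ℝ)/2-σ) * Kbar α σ x y := by
          rw [hH, hKbar_eq]; ring
  · -- degenerate case : the majorant integral diverges
    have hh₀not : ¬ IntegrableOn h₀ (Ioi 0) := fun h => hKint (hIK2.mpr h)
    have hcont : ContinuousOn h₀ (Ioi (0:ℝ)) := by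
      have hth_cont : Continuous th :=
        Real.continuous_sinh.div Real.continuous_cosh (fun s => (Real.cosh_pos s).ne')
      rw [hh₀def]
      apply ContinuousOn.mul
      apply ContinuousOn.mul
      · apply ContinuousOn.rpow_const
        · exact (Real.continuous_sinh.comp (continuous_const.mul continuous_id)).continuousOn
        · intro t ht
          left
          have : (0:ℝ) < Real.sinh (2*t) := by
            rw [Real.sinh_pos_iff]
            have : (0:ℝ) < t := ht
            positivity
          exact this.ne'
      · apply ContinuousOn.rexp
        apply ContinuousOn.sub
        · apply ContinuousOn.div continuousOn_const
            (continuous_const.mul hth_cont).continuousOn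
          intro t ht
          have := th_pos (show (0:ℝ) < t from ht)
          exact (mul_pos (by norm_num) this).ne'
        · exact ((hth_cont.mul continuous_const).div_const 4).continuousOn
      · apply ContinuousOn.rpow_const continuousOn_id
        intro t ht
        exact Or.inl (ne_of_gt ht)
    have hh₀nn : ∀ t ∈ Ioi (0:ℝ), 0 ≤ h₀ t := by
      intro t ht
      have ht0 : (0:ℝ) < t := ht
      have hsh : (0:ℝ) < Real.sinh (2*t) := by rw [Real.sinh_pos_iff]; positivity
      have h1 : (0:ℝ) ≤ Real.sinh (2*t) ^ (-(1:ℝ)/2) := Real.rpow_nonneg hsh.le _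
      have h2 : (0:ℝ) ≤ t^(σ-1) := Real.rpow_nonneg ht0.le _
      rw [hh₀def]
      positivity
    set T : ℝ := Real.arsinh (min (x*y) 1) / 2 with hTdef
    have hminpos : (0:ℝ) < min (x*y) 1 := lt_min hxy one_pos
    have hTpos : 0 < T := by
      rw [hTdef]
      have := Real.arsinh_pos_iff.2 hminpos
      linarith
    have hsinh2T : Real.sinh (2*T) = min (x*y) 1 := by
      rw [hTdef, show 2*(Real.arsinh (min (x*y) 1)/2) = Real.arsinh (min (x*y) 1) from by ring,
        Real.sinh_arsinh]
    -- h₀ is integrable away from 0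
    have hIoiT : IntegrableOn h₀ (Ioi T) := by
      set cT : ℝ := ((1 - Real.exp (-(4*T)))/2)^(-(1:ℝ)/2) with hcT
      have hexpT : Real.exp (-(4*T)) < 1 := by
        rw [Real.exp_lt_one_iff]; linarith
      have hcTpos : (0:ℝ) < (1 - Real.exp (-(4*T)))/2 := by
        have := Real.exp_pos (-(4*T)); linarith
      have hmaj : IntegrableOn (fun t : ℝ => cT * (Real.exp (-t) * t^(σ-1))) (Ioi T) :=
        ((Real.GammaIntegral_convergent hσ0).mono_set
          (Ioi_subset_Ioi hTpos.le)).const_mul cT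
      apply Integrable.mono' hmaj
        ((hcont.mono (Ioi_subset_Ioi hTpos.le)).aestronglyMeasurable measurableSet_Ioi)
      rw [ae_restrict_iff' measurableSet_Ioi]
      apply Filter.Eventually.of_forall
      intro t ht
      have htT : T < t := ht
      have ht0 : (0:ℝ) < t := lt_trans hTpos htT
      have hsh : (0:ℝ) < Real.sinh (2*t) := by rw [Real.sinh_pos_iff]; positivity
      rw [Real.norm_eq_abs, abs_of_nonneg (hh₀nn t ht0)]
      have hshlow : Real.exp (2*t) * ((1 - Real.exp (-(4*T)))/2) ≤ Real.sinh (2*t) := by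
        rw [Real.sinh_eq]
        have h1 : Real.exp (-(2*t)) = Real.exp (2*t) * Real.exp (-(4*t)) := by
          rw [← Real.exp_add]; ring_nf
        have h2 : Real.exp (-(4*t)) ≤ Real.exp (-(4*T)) := by
          apply Real.exp_le_exp.2; linarith
        have h3 : (0:ℝ) < Real.exp (2*t) := Real.exp_pos _
        have h4 : Real.exp (2*t) * Real.exp (-(4*t)) ≤ Real.exp (2*t) * Real.exp (-(4*T)) :=
          mul_le_mul_of_nonneg_left h2 h3.le
        rw [h1]
        linarith
      have hpow : Real.sinh (2*t) ^ (-(1:ℝ)/2)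
          ≤ (Real.exp (2*t) * ((1 - Real.exp (-(4*T)))/2)) ^ (-(1:ℝ)/2) :=
        Real.rpow_le_rpow_of_nonpos (mul_pos (Real.exp_pos _) hcTpos) hshlow (by norm_num)
      have hpow2 : (Real.exp (2*t) * ((1 - Real.exp (-(4*T)))/2)) ^ (-(1:ℝ)/2)
          = cT * Real.exp (-t) := by
        rw [Real.mul_rpow (Real.exp_pos _).le hcTpos.le, hcT]
        rw [← Real.exp_mul]
        norm_num
        ring_nf
      have hQ : Real.exp (-(x-y)^2/(4*th t) - th t*(x+y)^2/4) ≤ 1 := by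
        rw [Real.exp_le_one_iff]
        have hζ := th_pos ht0
        have h1 : (0:ℝ) ≤ (x-y)^2/(4*th t) := by positivity
        have h2 : (0:ℝ) ≤ th t*(x+y)^2/4 := by positivity
        have : -(x-y)^2/(4*th t) = -((x-y)^2/(4*th t)) := by ring
        rw [this]
        linarith
      have ht' : (0:ℝ) ≤ t^(σ-1) := Real.rpow_nonneg ht0.le _
      calc h₀ t = Real.sinh (2*t) ^ (-(1:ℝ)/2)
            * Real.exp (-(x-y)^2/(4*th t) - th t*(x+y)^2/4) * t^(σ-1) := by rw [hh₀def]
        _ ≤ (cT * Real.exp (-t)) * 1 * t^(σ-1) := by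
            apply mul_le_mul_of_nonneg_right _ ht'
            apply mul_le_mul (le_trans hpow (le_of_eq hpow2)) hQ (Real.exp_pos _).le
            exact mul_nonneg (Real.rpow_nonneg hcTpos.le _) (Real.exp_pos _).le
        _ = cT * (Real.exp (-t) * t^(σ-1)) := by ring
    have hIocT : ¬ IntegrableOn h₀ (Ioc 0 T) := by
      intro h
      apply hh₀not
      rw [← Ioc_union_Ioi_eq_Ioi hTpos.le]
      exact h.union hIoiT
    have hgnotint : ¬ IntegrableOn g (Ioi 0) := by
      intro hgint
      apply hIocT
      have hΓβ : (0:ℝ) < Real.Gamma (β+1/2) := Real.Gamma_pos_of_pos (by linarith)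
      have h2β : (0:ℝ) < (2:ℝ)^β := Real.rpow_pos_of_pos (by norm_num) β
      have hb2 : (0:ℝ) < β + 1/2 := by linarith
      have hmβ : (0:ℝ) < min 1 ((2:ℝ)^(β-1/2:ℝ)) :=
        lt_min one_pos (Real.rpow_pos_of_pos (by norm_num) _)
      set c1 : ℝ := Real.exp (-1) * min 1 (2^(β-1/2:ℝ))
          / ((β+1/2) * (2^β * Real.sqrt Real.pi * Real.Gamma (β+1/2))) with hc1
      have hc1pos : 0 < c1 := by
        rw [hc1]
        exact div_pos (mul_pos (Real.exp_pos _) hmβ)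
          (mul_pos hb2 (mul_pos (mul_pos h2β hπ) hΓβ))
      have hxyp : (0:ℝ) < (x*y)^(-β-1/2) := Real.rpow_pos_of_pos hxy _
      set C2 : ℝ := (c1 * (x*y)^(-β-1/2))⁻¹ with hC2
      have hC2pos : 0 < C2 := by rw [hC2]; exact inv_pos.2 (mul_pos hc1pos hxyp)
      have hbound : ∀ t ∈ Ioc (0:ℝ) T, ‖h₀ t‖ ≤ C2 * g t := by
        intro t ht
        obtain ⟨ht0, htT⟩ := ht
        have hsh : (0:ℝ) < Real.sinh (2*t) := by rw [Real.sinh_pos_iff]; positivity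
        have hz1 : 1 ≤ x*y/Real.sinh (2*t) := by
          rw [le_div_iff₀ hsh, one_mul]
          calc Real.sinh (2*t) ≤ Real.sinh (2*T) := Real.sinh_le_sinh.2 (by linarith)
            _ = min (x*y) 1 := hsinh2T
            _ ≤ x*y := min_le_left _ _
        have hlow := step1low β x y t hβ hx hy ht0 hz1
        have h2 := mul_le_mul_of_nonneg_right hlow (Real.rpow_nonneg ht0.le (σ-1))
        have h3 : c1 * (x*y)^(-β-1/2) * h₀ t ≤ g t := by
          refine le_trans (le_of_eq ?_) (le_trans h2 (le_of_eq ?_))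
          · rw [hh₀def, hc1]; ring
          · rw [hgdef]
        rw [Real.norm_eq_abs, abs_of_nonneg (hh₀nn t ht0)]
        calc h₀ t = C2 * (c1 * (x*y)^(-β-1/2) * h₀ t) := by
              rw [hC2, inv_mul_cancel_left₀ (mul_pos hc1pos hxyp).ne']
          _ ≤ C2 * g t := mul_le_mul_of_nonneg_left h3 hC2pos.le
      have hgInt2 : IntegrableOn (fun t => C2 * g t) (Ioc 0 T) :=
        (hgint.mono_set Ioc_subset_Ioi_self).const_mul C2
      apply Integrable.mono' hgInt2
        ((hcont.mono Ioc_subset_Ioi_self).aestronglyMeasurable measurableSet_Ioc)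
      rw [ae_restrict_iff' measurableSet_Ioc]
      exact Filter.Eventually.of_forall hbound
    have hzero : (∫ t in Ioi (0:ℝ), g t) = 0 := integral_undef hgnotint
    rw [hpot_eq, hzero, mul_zero, mul_zero]
    have hC : (0:ℝ) < (Real.Gamma σ)⁻¹ * c₀ * 2^((1:ℝ)/2-σ) := by positivity
    exact mul_nonneg hC.le hKbar_nn
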